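/- For all integers n ≥ 0, optcost(n+1) - optcost(n) = n + m + 2, where m is the unique nonnegative integer with m(m+1)/2 ≤ n < (m+1)(m+2)/2. -/
import Mathlib

/-- Cost of a list of batch sizes, where `i` batches have already been scheduled
and `t` jobs already processed: batch `b` completes at time `i + 1 + t + b`. -/
def batchCostAux : ℕ → ℕ → List ℕ → ℕ
  | _, _, [] => 0
  | i, t, b :: rest => b * (i + 1 + t + b) + batchCostAux (i + 1) (t + b) rest

/-- Total cost of a composition `l = (b_1, ..., b_r)`:  `Σ_i b_i (i + Σ_{j ≤ i} b_j)`. -/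
def batchCost (l : List ℕ) : ℕ := batchCostAux 0 0 l

/-- Minimum sum of completion times for `n` unit jobs in the list 1-batch problem. -/
noncomputable def optcost (n : ℕ) : ℕ :=
  sInf {c | ∃ l : List ℕ, (∀ b ∈ l, 0 < b) ∧ l.sum = n ∧ batchCost l = c}

/-! Auxiliary development -/

/-- Triangular numbers. -/
def Tn : ℕ → ℕ
  | 0 => 0
  | m+1 => Tn m + (m+1)

lemma Tn_two (m : ℕ) : 2 * Tn m = m * (m + 1) := by
  induction m with
  | zero => rfl
  | succ k ih =>
    simp only [Tn]
    have h : (k+1) * (k+1+1) = k * (k+1) + 2 * (k+1) := by ring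
    omega

lemma Tn_mono : Monotone Tn :=
  monotone_nat_of_le_succ (fun m => by simp [Tn])

lemma le_Tn (m : ℕ) : m ≤ Tn m := by
  induction m with
  | zero => simp [Tn]
  | succ k ih => simp only [Tn]; omega

lemma Tn_succ_sub (M : ℕ) (h : 1 ≤ M) : Tn (M - 1) + M = Tn M := by
  have h2 : M = (M - 1) + 1 := by omega
  conv_rhs => rw [h2]
  simp only [Tn]
  omega

/-- `mval n` is the unique `m` with `Tn m ≤ n < Tn (m+1)`. -/
def mval (n : ℕ) : ℕ := Nat.findGreatest (fun m => Tn m ≤ n) n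

lemma le_mval {a x : ℕ} (h : Tn a ≤ x) : a ≤ mval x :=
  Nat.le_findGreatest (le_trans (le_Tn a) h) h

lemma Tn_mval_le (n : ℕ) : Tn (mval n) ≤ n := by
  rcases Nat.eq_zero_or_pos (mval n) with h | h
  · rw [h]; exact Nat.zero_le n
  · exact Nat.findGreatest_spec (P := fun m => Tn m ≤ n) (Nat.zero_le n) (Nat.zero_le n)

lemma lt_Tn_mval (n : ℕ) : n < Tn (mval n + 1) := by
  by_contra h
  push_neg at h
  have := le_mval h
  omega

lemma mval_eq {m n : ℕ} (h1 : Tn m ≤ n) (h2 : n < Tn (m+1)) : mval n = m := by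
  have hle : m ≤ mval n := le_mval h1
  have : mval n ≤ m := by
    by_contra h
    push_neg at h
    have h3 : Tn (m+1) ≤ Tn (mval n) := Tn_mono h
    have := Tn_mval_le n
    omega
  omega

lemma mval_mono {a b : ℕ} (h : a ≤ b) : mval a ≤ mval b :=
  le_mval (le_trans (Tn_mval_le a) h)

/-- The optimal cost function. -/
def F : ℕ → ℕ
  | 0 => 0
  | n+1 => F n + n + mval n + 2

lemma F_succ (n : ℕ) : F (n+1) = F n + n + mval n + 2 := rfl

lemma mval_le_self (s : ℕ) : mval s ≤ s := le_trans (le_Tn _) (Tn_mval_le s)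

lemma mval_zero : mval 0 = 0 := mval_eq (by simp [Tn]) (by simp [Tn])

/-- Key equality: taking a first batch of size `mval s + 1` for `s+1` jobs is optimal. -/
lemma F_eq (s : ℕ) : F (s+1) = (s+1) * (mval s + 2) + F (s - mval s) := by
  induction s using Nat.strong_induction_on with
  | _ s ih =>
    rcases Nat.eq_zero_or_pos s with hs0 | hs0
    · subst hs0
      simp [F, mval_zero]
    have hTM : Tn (mval s) ≤ s := Tn_mval_le s
    have hTM1 : s < Tn (mval s + 1) := lt_Tn_mval s
    have hMs : mval s ≤ s := mval_le_self s
    have hTsucc : Tn (mval s + 1) = Tn (mval s) + (mval s + 1) := by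
      simp only [Tn]
    rcases eq_or_lt_of_le hTM with heq | hlt
    · -- s = Tn (mval s) (first value with this mval)
      have hM1 : 1 ≤ mval s := by
        by_contra h
        push_neg at h
        have h0 : mval s = 0 := by omega
        rw [h0] at heq
        simp [Tn] at heq
        omega
      have hTsub : Tn (mval s - 1) + mval s = Tn (mval s) := Tn_succ_sub _ hM1
      have hmv : mval (s - 1) = mval s - 1 := by
        apply mval_eq
        · omega
        · have : Tn (mval s - 1 + 1) = Tn (mval s - 1) + (mval s - 1 + 1) := by
            simp only [Tn]
          omega
      have iht := ih (s - 1) (by omega)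
      rw [hmv] at iht
      have hst : s - 1 + 1 = s := by omega
      rw [hst] at iht
      have hr1 : s - 1 - (mval s - 1) = s - mval s := by omega
      rw [hr1] at iht
      -- iht : F s = s * (mval s - 1 + 2) + F (s - mval s)
      have h1 : mval s - 1 + 2 = mval s + 1 := by omega
      rw [h1] at iht
      rw [F_succ, iht]
      have hring : (s+1) * (mval s + 2) = s * (mval s + 1) + s + mval s + 2 := by ring
      omega
    · -- Tn (mval s) < s
      have hM1 : 1 ≤ mval s := by
        by_contra h
        push_neg at h
        have h0 : mval s = 0 := by omega
        rw [h0] at hlt hTM1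
        simp [Tn] at hlt hTM1
        omega
      have hmvt : mval (s - 1) = mval s := by
        apply mval_eq
        · omega
        · omega
      have iht := ih (s - 1) (by omega)
      rw [hmvt] at iht
      have hst : s - 1 + 1 = s := by omega
      rw [hst] at iht
      -- iht : F s = s * (mval s + 2) + F (s - 1 - mval s)
      have hTsub : Tn (mval s - 1) + mval s = Tn (mval s) := Tn_succ_sub _ hM1
      obtain ⟨r, hr⟩ : ∃ r, s - mval s - 1 = r := ⟨_, rfl⟩
      have hmv2 : mval r = mval s - 1 := by
        rw [← hr]
        apply mval_eq
        · omega
        · have : Tn (mval s - 1 + 1) = Tn (mval s - 1) + (mval s - 1 + 1) := by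
            simp only [Tn]
          omega
      have hsMr : s - mval s = r + 1 := by omega
      have hr2 : s - 1 - mval s = r := by omega
      rw [hr2] at iht
      rw [F_succ, iht, hsMr, F_succ, hmv2]
      have hring : (s+1) * (mval s + 2) = s * (mval s + 2) + mval s + 2 := by ring
      omega

/-- Key inequality: F n ≤ n * (b+1) + F (n - b) for all 1 ≤ b ≤ n. -/
lemma F_key (n b : ℕ) (hb : 1 ≤ b) (hbn : b ≤ n) : F n ≤ n * (b + 1) + F (n - b) := by
  obtain ⟨s, rfl⟩ : ∃ s, n = s + 1 := ⟨n - 1, by omega⟩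
  have hTM : Tn (mval s) ≤ s := Tn_mval_le s
  have hTM1 : s < Tn (mval s + 1) := lt_Tn_mval s
  have hMs : mval s ≤ s := mval_le_self s
  -- downward induction: for d ≤ mval s
  have down : ∀ d, d ≤ mval s →
      F (s+1) ≤ (s+1) * ((mval s - d) + 2) + F (s + 1 - (mval s + 1 - d)) := by
    intro d
    induction d with
    | zero =>
      intro _
      simp only [Nat.sub_zero]
      have heq := F_eq s
      have h1 : s + 1 - (mval s + 1) = s - mval s := by omega
      rw [h1]
      omega
    | succ d ihd =>
      intro hdM
      have ihd' := ihd (by omega)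
      obtain ⟨A, hA'⟩ : ∃ A, s + 1 - (mval s + 1 - (d+1)) = A + 1 :=
        ⟨s + 1 - (mval s + 1 - (d+1)) - 1, by omega⟩
      have hA : s + 1 - (mval s + 1 - d) = A := by omega
      rw [hA] at ihd'
      rw [hA']
      -- bound mval A from below
      have hmvA : mval s ≤ mval A + 1 := by
        rcases Nat.eq_zero_or_pos (mval s) with h0 | h0
        · omega
        · have h1 : Tn (mval s - 1) + mval s = Tn (mval s) := Tn_succ_sub _ h0
          have hA'ge : Tn (mval s - 1) ≤ A := by omega
          have := le_mval hA'ge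
          omega
      have hFA : F (A + 1) = F A + A + mval A + 2 := F_succ A
      obtain ⟨c, hc⟩ : ∃ c, mval s - (d+1) = c := ⟨_, rfl⟩
      have hMd : mval s - d = c + 1 := by omega
      rw [hMd] at ihd'
      rw [hc]
      -- ihd' : F (s+1) ≤ (s+1) * (c + 1 + 2) + F A
      -- goal : F (s+1) ≤ (s+1) * (c + 2) + F (A + 1)
      have hring : (s+1) * (c + 1 + 2) = (s+1) * (c + 2) + (s+1) := by ring
      have hAc : A + c + 2 = s + 1 := by omega
      omega
  -- upward induction
  have up : ∀ e, mval s + 1 + e ≤ s + 1 →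
      F (s+1) ≤ (s+1) * (mval s + 2 + e) + F (s + 1 - (mval s + 1 + e)) := by
    intro e
    induction e with
    | zero =>
      intro _
      have heq := F_eq s
      have h1 : s + 1 - (mval s + 1 + 0) = s - mval s := by omega
      rw [h1]
      have h2 : mval s + 2 + 0 = mval s + 2 := by omega
      rw [h2]
      omega
    | succ e ihe =>
      intro he
      have ihe' := ihe (by omega)
      obtain ⟨A, hAdef⟩ : ∃ A, s + 1 - (mval s + 1 + (e+1)) = A := ⟨_, rfl⟩
      have hA : s + 1 - (mval s + 1 + e) = A + 1 := by omega
      rw [hA] at ihe'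
      rw [hAdef]
      have hFA : F (A + 1) = F A + A + mval A + 2 := F_succ A
      have hmvA : mval A ≤ mval s := mval_mono (by omega)
      have hring : (s+1) * (mval s + 2 + (e+1)) = (s+1) * (mval s + 2 + e) + (s+1) := by ring
      have hAn : A + mval s + 2 + e = s + 1 := by omega
      omega
  rcases le_or_gt b (mval s + 1) with hble | hbgt
  · have hd := down (mval s + 1 - b) (by omega)
    have h1 : mval s - (mval s + 1 - b) = b - 1 := by omega
    have h2 : mval s + 1 - (mval s + 1 - b) = b := by omega
    rw [h1, h2] at hd
    have h3 : b - 1 + 2 = b + 1 := by omega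
    rw [h3] at hd
    exact hd
  · have he := up (b - (mval s + 1)) (by omega)
    have h1 : mval s + 2 + (b - (mval s + 1)) = b + 1 := by omega
    have h2 : mval s + 1 + (b - (mval s + 1)) = b := by omega
    rw [h1, h2] at he
    exact he

lemma batchCostAux_shift (l : List ℕ) :
    ∀ i t, batchCostAux i t l = batchCost l + (i + t) * l.sum := by
  induction l with
  | nil => intro i t; simp [batchCostAux, batchCost]
  | cons b rest ih =>
    intro i t
    simp only [batchCostAux, batchCost, List.sum_cons]
    rw [ih (i+1) (t+b), ih (0+1) (0+b)]
    unfold batchCost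
    ring

lemma batchCost_cons (b : ℕ) (l : List ℕ) :
    batchCost (b :: l) = (b + l.sum) * (b + 1) + batchCost l := by
  unfold batchCost
  simp only [batchCostAux]
  rw [batchCostAux_shift l (0+1) (0+b)]
  unfold batchCost
  ring

/-- Lower bound: every composition costs at least `F`. -/
lemma F_lb (l : List ℕ) (hpos : ∀ b ∈ l, 0 < b) : F l.sum ≤ batchCost l := by
  induction l with
  | nil => simp [batchCost, batchCostAux, F]
  | cons b rest ih =>
    have hb : 0 < b := hpos b (by simp)
    have ih' := ih (fun x hx => hpos x (by simp [hx]))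
    rw [batchCost_cons, List.sum_cons]
    have hkey := F_key (b + rest.sum) b hb (by omega)
    have h1 : b + rest.sum - b = rest.sum := by omega
    rw [h1] at hkey
    omega

/-- Upper bound: `F n` is achieved. -/
lemma F_ub (n : ℕ) : ∃ l : List ℕ, (∀ b ∈ l, 0 < b) ∧ l.sum = n ∧ batchCost l = F n := by
  induction n using Nat.strong_induction_on with
  | _ n ih =>
    rcases Nat.eq_zero_or_pos n with h0 | h0
    · subst h0; exact ⟨[], by simp, rfl, by simp [batchCost, batchCostAux, F]⟩
    obtain ⟨s, rfl⟩ : ∃ s, n = s + 1 := ⟨n - 1, by omega⟩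
    have hMs : mval s ≤ s := mval_le_self s
    obtain ⟨l', hpos', hsum', hcost'⟩ := ih (s - mval s) (by omega)
    refine ⟨(mval s + 1) :: l', ?_, ?_, ?_⟩
    · intro x hx
      rcases List.mem_cons.mp hx with h | h
      · omega
      · exact hpos' x h
    · rw [List.sum_cons, hsum']; omega
    · rw [batchCost_cons, hsum', hcost', F_eq s]
      have h1 : mval s + 1 + (s - mval s) = s + 1 := by omega
      rw [h1]

lemma optcost_eq_F (n : ℕ) : optcost n = F n := by
  obtain ⟨l, hpos, hsum, hcost⟩ := F_ub n
  have hmem : F n ∈ {c | ∃ l : List ℕ, (∀ b ∈ l, 0 < b) ∧ l.sum = n ∧ batchCost l = c} :=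
    ⟨l, hpos, hsum, hcost⟩
  unfold optcost
  apply le_antisymm
  · exact Nat.sInf_le hmem
  · refine le_csInf ⟨F n, hmem⟩ ?_
    rintro c ⟨l', hpos', hsum', hcost'⟩
    rw [← hcost', ← hsum']
    exact F_lb l' hpos'

/-- For all `n ≥ 0`, `optcost (n+1) - optcost n = n + m + 2`, where `m` is the
unique nonnegative integer with `m(m+1)/2 ≤ n < (m+1)(m+2)/2`. -/
theorem optcost_increment (n m : ℕ) (h1 : m * (m + 1) / 2 ≤ n)
    (h2 : n < (m + 1) * (m + 2) / 2) :
    optcost (n + 1) - optcost n = n + m + 2 := by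
  have hT1 : 2 * Tn m = m * (m + 1) := Tn_two m
  have hT2 : 2 * Tn (m + 1) = (m + 1) * (m + 2) := Tn_two (m + 1)
  have e1 : Tn m ≤ n := by omega
  have e2 : n < Tn (m + 1) := by omega
  have hmv : mval n = m := mval_eq e1 e2
  rw [optcost_eq_F, optcost_eq_F]
  have hF : F (n + 1) = F n + n + mval n + 2 := F_succ n
  omega
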